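/- (Main theorem, injectivity.) Assume the Lipschitz constants are constant, c_n = C > 0 for all n ∈ ℤ⁺, and that q := sup_{m∈ℤ⁺} Σ_{n∈ℤ⁺} c_n ‖𝒢(m,n+1)‖ satisfies K(1)q < 1, where K is the function from axiom (A). Let η ∈ 𝓜 be the function from the main theorem satisfying h^m(𝒜(m,n)φ) = R(m,n)(h^n(φ)) for all m ≥ n ≥ 0 and φ ∈ F_n, where h^n = Id_{F_n} + η^n. Then for every n ∈ ℤ⁺ the map h^n : F_n → B is one-to-one. -/
import Mathlib


noncomputable section

open Filter

/-- The nonpositive integers. -/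
abbrev Zneg : Type := {j : ℤ // j ≤ 0}

/-- The segment `x_m : ℤ⁻ → X` of a sequence `x : ℤ → X`, i.e. `x_m(j) = x(m+j)`. -/
def seg {X : Type*} (x : ℤ → X) (m : ℤ) : Zneg → X := fun j => x (m + j.1)

variable {X : Type*} [NormedAddCommGroup X] [NormedSpace ℝ X] [CompleteSpace X]
variable {𝓑 : Type*} [NormedAddCommGroup 𝓑] [NormedSpace ℝ 𝓑] [CompleteSpace 𝓑]

/-- Axiom (A) for a Banach space `𝓑` of sequences `ℤ⁻ → X` (represented through an injective
linear map `ι : 𝓑 → (ℤ⁻ → X)`), with constants `J > 0` and `K, M : ℤ⁺ → [0,∞)`: whenever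
`x : ℤ → X` has `x_0 ∈ 𝓑`, then `x_n ∈ 𝓑` and
`J‖x(n)‖ ≤ ‖x_n‖_𝓑 ≤ K(n) sup_{0≤j≤n}‖x(j)‖ + M(n)‖x_0‖_𝓑` for all `n ∈ ℤ⁺`. -/
def AxiomA (ι : 𝓑 →ₗ[ℝ] (Zneg → X)) (J : ℝ) (K M : ℕ → ℝ) : Prop :=
  0 < J ∧ (∀ n, 0 ≤ K n) ∧ (∀ n, 0 ≤ M n) ∧
    ∀ (x : ℤ → X) (φ₀ : 𝓑), ι φ₀ = seg x 0 →
      ∀ n : ℕ, ∃ φₙ : 𝓑, ι φₙ = seg x (n : ℤ) ∧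
        J * ‖x (n : ℤ)‖ ≤ ‖φₙ‖ ∧
        ‖φₙ‖ ≤ K n * (⨆ j : Fin (n + 1), ‖x ((j : ℕ) : ℤ)‖) + M n * ‖φ₀‖

/-- The sequence `Γv : ℤ⁻ → X`, `(Γv)(0) = v` and `(Γv)(j) = 0` for `j < 0`. -/
def gammaSeq {X : Type*} [NormedAddCommGroup X] (v : X) : Zneg → X :=
  fun j => if j.1 = 0 then v else 0

/-- `x : ℤ → X` solves the linear equation `x(m+1) = A_m x_m` for all `m ≥ n`,
with all segments `x_m` (for `m ≥ n`) belonging to `𝓑`. -/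
def IsLinSolFrom (ι : 𝓑 →ₗ[ℝ] (Zneg → X)) (A : ℕ → 𝓑 →L[ℝ] X)
    (x : ℤ → X) (n : ℕ) : Prop :=
  ∀ m : ℕ, n ≤ m → ∃ ψ : 𝓑, ι ψ = seg x (m : ℤ) ∧ x ((m : ℤ) + 1) = A m ψ

/-- `x : ℤ → X` solves the semilinear equation `x(m+1) = A_m x_m + f_m(x_m)` for all `m ≥ n`,
with all segments `x_m` (for `m ≥ n`) belonging to `𝓑`. -/
def IsSemiSolFrom (ι : 𝓑 →ₗ[ℝ] (Zneg → X)) (A : ℕ → 𝓑 →L[ℝ] X)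
    (f : ℕ → 𝓑 → X) (x : ℤ → X) (n : ℕ) : Prop :=
  ∀ m : ℕ, n ≤ m → ∃ ψ : 𝓑, ι ψ = seg x (m : ℤ) ∧ x ((m : ℤ) + 1) = A m ψ + f m ψ

/-- The Green operator `𝒢(m,n) = 𝒜(m,n)P_n` for `m ≥ n`, `𝒢(m,n) = -𝒜(m,n)Q_n` for `m < n`. -/
def Green (𝒜 : ℕ → ℕ → 𝓑 →L[ℝ] 𝓑) (P : ℕ → 𝓑 →L[ℝ] 𝓑) (m n : ℕ) : 𝓑 →L[ℝ] 𝓑 :=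
  if n ≤ m then (𝒜 m n).comp (P n)
  else -((𝒜 m n).comp (ContinuousLinearMap.id ℝ 𝓑 - P n))

/-- `F_n = Ker P_n`. -/
abbrev Fn (P : ℕ → 𝓑 →L[ℝ] 𝓑) (n : ℕ) := {φ : 𝓑 // P n φ = 0}

/-- `𝒜(m,n)` restricted to a map `F_n → F_m` (using the kernel invariance). -/
def kerMap (𝒜 : ℕ → ℕ → 𝓑 →L[ℝ] 𝓑) (P : ℕ → 𝓑 →L[ℝ] 𝓑)
    (hker : ∀ (m n : ℕ) (φ : 𝓑), P n φ = 0 → P m (𝒜 m n φ) = 0)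
    (m n : ℕ) (φ : Fn P n) : Fn P m :=
  ⟨𝒜 m n φ.1, hker m n φ.1 φ.2⟩

/-- Membership in `𝓜`: `η = (η^n)_{n∈ℤ⁺}` with `η^n : F_n → 𝓑` continuous and
`‖η‖_∞ = sup_{n,φ} ‖η^n(φ)‖ < ∞`. -/
def inM (P : ℕ → 𝓑 →L[ℝ] 𝓑) (η : ∀ n : ℕ, Fn P n → 𝓑) : Prop :=
  (∀ n, Continuous (η n)) ∧ ∃ C : ℝ, ∀ (n : ℕ) (φ : Fn P n), ‖η n φ‖ ≤ C

/-- The supremum norm `‖η‖_∞ = sup_{n∈ℤ⁺, φ∈F_n} ‖η^n(φ)‖` on `𝓜`. -/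
def Mnorm (P : ℕ → 𝓑 →L[ℝ] 𝓑) (η : ∀ n : ℕ, Fn P n → 𝓑) : ℝ :=
  ⨆ p : Σ n : ℕ, Fn P n, ‖η p.1 p.2‖

/-- The map `F(η)(n,φ) = Σ_{m∈ℤ⁺} 𝒢(n,m+1) Γ f_m(𝒜(m,n)φ + η^m(𝒜(m,n)φ))` for `φ ∈ F_n`. -/
def Fmap (𝒜 : ℕ → ℕ → 𝓑 →L[ℝ] 𝓑) (P : ℕ → 𝓑 →L[ℝ] 𝓑)
    (hker : ∀ (m n : ℕ) (φ : 𝓑), P n φ = 0 → P m (𝒜 m n φ) = 0)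
    (γ : X → 𝓑) (f : ℕ → 𝓑 → X)
    (η : ∀ n : ℕ, Fn P n → 𝓑) (n : ℕ) (φ : Fn P n) : 𝓑 :=
  ∑' m : ℕ, Green 𝒜 P n (m + 1)
      (γ (f m (𝒜 m n φ.1 + η m (kerMap 𝒜 P hker m n φ))))

/-- Main theorem (injectivity). Assume the Lipschitz constants are constant, `c_n = C > 0`,
and `q := sup_{m∈ℤ⁺} Σ_{n∈ℤ⁺} c_n ‖𝒢(m,n+1)‖` satisfies `K(1)q < 1`, with `K` from axiom
(A). If `η ∈ 𝓜` satisfies the conjugacy `h^m(𝒜(m,n)φ) = R(m,n)(h^n(φ))` for all `m ≥ n ≥ 0`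
and `φ ∈ F_n`, where `h^n = Id_{F_n} + η^n`, then each `h^n : F_n → 𝓑` is one-to-one. -/
theorem stmt_9
    (ι : 𝓑 →ₗ[ℝ] (Zneg → X)) (hι : Function.Injective ι)
    (J : ℝ) (K M : ℕ → ℝ) (hAx : AxiomA ι J K M)
    (A : ℕ → 𝓑 →L[ℝ] X) (𝒜 : ℕ → ℕ → 𝓑 →L[ℝ] 𝓑)
    (hsolA : ∀ (k : ℕ) (ψ : 𝓑) (y : ℤ → X), ι ψ = seg y (k : ℤ) → IsLinSolFrom ι A y k →
      ∀ m : ℕ, k ≤ m → ι (𝒜 m k ψ) = seg y (m : ℤ))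
    (P : ℕ → 𝓑 →L[ℝ] 𝓑) (hproj : ∀ n, (P n).comp (P n) = P n)
    (hcomm : ∀ m n : ℕ, n ≤ m → (P m).comp (𝒜 m n) = (𝒜 m n).comp (P n))
    (hker : ∀ (m n : ℕ) (φ : 𝓑), P n φ = 0 → P m (𝒜 m n φ) = 0)
    (hinv₁ : ∀ m n : ℕ, m ≤ n → ∀ φ : 𝓑, P n φ = 0 → 𝒜 n m (𝒜 m n φ) = φ)
    (hinv₂ : ∀ m n : ℕ, m ≤ n → ∀ φ : 𝓑, P m φ = 0 → 𝒜 m n (𝒜 n m φ) = φ)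
    (γ : X → 𝓑) (hγ : ∀ v : X, ι (γ v) = gammaSeq v)
    -- the Lipschitz constants are constant: `c_n = C > 0`
    (f : ℕ → 𝓑 → X) (C : ℝ) (hC : 0 < C) (hf0 : ∀ m, f m 0 = 0)
    (hf : ∀ (m : ℕ) (φ ψ : 𝓑), ‖f m φ - f m ψ‖ ≤ C * min 1 ‖φ - ψ‖)
    (R : ℕ → ℕ → 𝓑 → 𝓑)
    (hsolR : ∀ (k : ℕ) (ψ : 𝓑) (y : ℤ → X), ι ψ = seg y (k : ℤ) → IsSemiSolFrom ι A f y k →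
      ∀ m : ℕ, k ≤ m → ι (R m k ψ) = seg y (m : ℤ))
    (hqsum : ∀ m : ℕ, Summable fun k : ℕ => C * ‖Green 𝒜 P m (k + 1)‖)
    (hqbdd : BddAbove (Set.range fun m : ℕ => ∑' k : ℕ, C * ‖Green 𝒜 P m (k + 1)‖))
    (hq : K 1 * (⨆ m : ℕ, ∑' k : ℕ, C * ‖Green 𝒜 P m (k + 1)‖) < 1)
    -- `η` is the function from the main theorem satisfying the conjugacy
    (η : ∀ n : ℕ, Fn P n → 𝓑) (hη : inM P η)
    (hconj : ∀ m n : ℕ, n ≤ m → ∀ φ : Fn P n,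
      (kerMap 𝒜 P hker m n φ).1 + η m (kerMap 𝒜 P hker m n φ) = R m n (φ.1 + η n φ)) :
    ∀ n : ℕ, Function.Injective (fun φ : Fn P n => φ.1 + η n φ) := by
  obtain ⟨-, N, hN⟩ := hη
  intro n φ ψ hEq
  simp only at hEq
  -- the difference z = φ - ψ (in Ker P n)
  set z : 𝓑 := φ.1 - ψ.1 with hzdef
  have hPz : P n z = 0 := by
    simp [hzdef, map_sub, φ.2, ψ.2]
  -- for all m ≥ n, 𝒜 m n z is bounded by N + N
  have hbound : ∀ m : ℕ, n ≤ m → ‖𝒜 m n z‖ ≤ N + N := by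
    intro m hm
    have h1 := hconj m n hm φ
    have h2 := hconj m n hm ψ
    rw [hEq] at h1
    have h3 : (kerMap 𝒜 P hker m n φ).1 + η m (kerMap 𝒜 P hker m n φ)
        = (kerMap 𝒜 P hker m n ψ).1 + η m (kerMap 𝒜 P hker m n ψ) := h1.trans h2.symm
    have h4 : 𝒜 m n z = η m (kerMap 𝒜 P hker m n ψ) - η m (kerMap 𝒜 P hker m n φ) := by
      have : (kerMap 𝒜 P hker m n φ).1 - (kerMap 𝒜 P hker m n ψ).1
          = η m (kerMap 𝒜 P hker m n ψ) - η m (kerMap 𝒜 P hker m n φ) := by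
        rw [sub_eq_sub_iff_add_eq_add, h3, add_comm]
      simpa [kerMap, hzdef, map_sub] using this
    rw [h4]
    exact (norm_sub_le _ _).trans (add_le_add (hN m _) (hN m _))
  -- ‖z‖ ≤ ‖Green n (k+1)‖ * (N + N) for all k ≥ n
  have hkey : ∀ k : ℕ, n ≤ k → ‖z‖ ≤ ‖Green 𝒜 P n (k + 1)‖ * (N + N) := by
    intro k hk
    have hnk : n ≤ k + 1 := hk.trans (Nat.le_succ k)
    have hzrec : 𝒜 n (k + 1) (𝒜 (k + 1) n z) = z := hinv₂ n (k + 1) hnk z hPz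
    have hPθ : P (k + 1) (𝒜 (k + 1) n z) = 0 := hker (k + 1) n z hPz
    have hg : Green 𝒜 P n (k + 1) (𝒜 (k + 1) n z) = -z := by
      have hnotle : ¬ (k + 1 ≤ n) := by omega
      simp only [Green, if_neg hnotle]
      simp [ContinuousLinearMap.comp_apply, hPθ, hzrec]
    calc ‖z‖ = ‖Green 𝒜 P n (k + 1) (𝒜 (k + 1) n z)‖ := by rw [hg, norm_neg]
      _ ≤ ‖Green 𝒜 P n (k + 1)‖ * ‖𝒜 (k + 1) n z‖ :=
          ContinuousLinearMap.le_opNorm _ _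
      _ ≤ ‖Green 𝒜 P n (k + 1)‖ * (N + N) :=
          mul_le_mul_of_nonneg_left (hbound (k + 1) hnk) (norm_nonneg _)
  -- the terms C * ‖Green n (k+1)‖ tend to 0, hence C * ‖z‖ ≤ 0
  have htend : Tendsto (fun k : ℕ => C * ‖Green 𝒜 P n (k + 1)‖ * (N + N)) atTop (nhds 0) := by
    have := ((hqsum n).tendsto_atTop_zero).mul_const (N + N)
    simpa using this
  have hle : C * ‖z‖ ≤ 0 := by
    refine ge_of_tendsto htend ?_
    filter_upwards [Filter.eventually_ge_atTop n] with k hk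
    have := mul_le_mul_of_nonneg_left (hkey k hk) hC.le
    calc C * ‖z‖ ≤ C * (‖Green 𝒜 P n (k + 1)‖ * (N + N)) := this
      _ = C * ‖Green 𝒜 P n (k + 1)‖ * (N + N) := by ring
  have hz0 : z = 0 := by
    have hn : ‖z‖ ≤ 0 := by nlinarith [norm_nonneg z]
    exact norm_le_zero_iff.mp hn
  exact Subtype.ext (sub_eq_zero.mp hz0)
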